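/- Let M : ℕ → ℝ be a sequence of positive reals with M_0 = 1, M increasing, M logarithmically convex, and having moderate growth: sup_{j+k≥1} (M_{j+k}/(M_j·M_k))^{1/(j+k)} < ∞. Then for every real s ≥ 1 there exists a constant ρ(s) ≥ 1, depending only on s and M, such that h_M(t) ≤ (h_M(ρ(s)·t))^s for all t ≥ 0, where h_M(t) = inf_{j≥0} t^j·M_j for t > 0 and h_M(0) = 0. -/

import Mathlib

open Set Filter Topology

noncomputable section

/-- The function `h_M` associated with the sequence `M`:
`h_M(t) = inf_{j≥0} t^j·M_j` for `t ≠ 0`, and `h_M(0) = 0`. -/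
def hFun (M : ℕ → ℝ) (t : ℝ) : ℝ := if t = 0 then 0 else ⨅ j : ℕ, t ^ j * M j

section Aux
variable {M : ℕ → ℝ}

lemma hFun_bdd (hpos : ∀ j, 0 < M j) {t : ℝ} (ht : 0 ≤ t) :
    BddBelow (Set.range fun j : ℕ => t ^ j * M j) := by
  refine ⟨0, ?_⟩
  rintro x ⟨j, rfl⟩
  exact mul_nonneg (pow_nonneg ht _) (hpos j).le

lemma hFun_nonneg (hpos : ∀ j, 0 < M j) {t : ℝ} (ht : 0 ≤ t) : 0 ≤ hFun M t := by
  unfold hFun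
  split
  · exact le_refl 0
  · exact le_ciInf fun j => mul_nonneg (pow_nonneg ht _) (hpos j).le

lemma hFun_le (hpos : ∀ j, 0 < M j) {t : ℝ} (ht : 0 < t) (j : ℕ) :
    hFun M t ≤ t ^ j * M j := by
  unfold hFun
  rw [if_neg ht.ne']
  exact ciInf_le (hFun_bdd hpos ht.le) j

lemma hFun_le_one (hpos : ∀ j, 0 < M j) (hM0 : M 0 = 1) {t : ℝ} (ht : 0 < t) :
    hFun M t ≤ 1 := by
  have := hFun_le hpos ht 0
  simpa [hM0] using this

lemma hFun_sq (hpos : ∀ j, 0 < M j) {A : ℝ} (hA : 1 ≤ A)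
    (hAM : ∀ j, M (2*j) ≤ A ^ (2*j) * M j ^ 2)
    {t : ℝ} (ht : 0 < t) : hFun M t ≤ (hFun M (A * t)) ^ 2 := by
  have hA0 : 0 < A := lt_of_lt_of_le one_pos hA
  have hAt : 0 < A * t := mul_pos hA0 ht
  have key : ∀ j, hFun M t ≤ ((A*t)^j * M j)^2 := by
    intro j
    calc hFun M t ≤ t ^ (2*j) * M (2*j) := hFun_le hpos ht _
    _ ≤ t^(2*j) * (A^(2*j) * M j ^ 2) :=
        mul_le_mul_of_nonneg_left (hAM j) (pow_nonneg ht.le _)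
    _ = ((A*t)^j * M j)^2 := by ring
  have h1 : Real.sqrt (hFun M t) ≤ hFun M (A*t) := by
    unfold hFun
    rw [if_neg hAt.ne']
    refine le_ciInf fun j => ?_
    calc Real.sqrt (hFun M t) ≤ Real.sqrt (((A*t)^j * M j)^2) :=
          Real.sqrt_le_sqrt (key j)
    _ = (A*t)^j * M j := Real.sqrt_sq (mul_nonneg (pow_nonneg hAt.le _) (hpos j).le)
  calc hFun M t = Real.sqrt (hFun M t)^2 := (Real.sq_sqrt (hFun_nonneg hpos ht.le)).symm
  _ ≤ (hFun M (A*t))^2 := pow_le_pow_left₀ (Real.sqrt_nonneg _) h1 2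

lemma hFun_iter (hpos : ∀ j, 0 < M j) {A : ℝ} (hA : 1 ≤ A)
    (hAM : ∀ j, M (2*j) ≤ A ^ (2*j) * M j ^ 2) :
    ∀ n : ℕ, ∀ t : ℝ, 0 < t → hFun M t ≤ (hFun M (A^n * t))^(2^n) := by
  intro n
  induction n with
  | zero => intro t ht; simp
  | succ n ih =>
    intro t ht
    have hA0 : 0 < A := lt_of_lt_of_le one_pos hA
    have hAnt : 0 < A^n * t := mul_pos (pow_pos hA0 n) ht
    have h1 : hFun M t ≤ (hFun M (A^n * t))^(2^n) := ih t ht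
    have h2 : hFun M (A^n * t) ≤ (hFun M (A * (A^n * t)))^2 := hFun_sq hpos hA hAM hAnt
    have h3 : (hFun M (A^n * t))^(2^n) ≤ ((hFun M (A * (A^n * t)))^2)^(2^n) :=
      pow_le_pow_left₀ (hFun_nonneg hpos hAnt.le) h2 _
    calc hFun M t ≤ ((hFun M (A * (A^n * t)))^2)^(2^n) := h1.trans h3
    _ = (hFun M (A^(n+1) * t))^(2^(n+1)) := by
        rw [← pow_mul]
        ring_nf

end Aux

/-- Under the moderate growth condition, `h_M(t) ≤ (h_M(ρ(s)·t))^s` for `s ≥ 1`. -/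
theorem hFun_power_bound_of_moderate_growth
    (M : ℕ → ℝ) (hpos : ∀ j, 0 < M j) (hM0 : M 0 = 1) (hmono : Monotone M)
    (hlc : ∀ j : ℕ, (M (j+1))^2 ≤ M j * M (j+2))
    (hmg : ∃ A : ℝ, ∀ j k : ℕ, 1 ≤ j + k →
      (M (j+k) / (M j * M k)) ^ ((1:ℝ)/((j:ℝ)+(k:ℝ))) ≤ A) :
    ∀ s : ℝ, 1 ≤ s → ∃ ρ ≥ (1:ℝ), ∀ t : ℝ, 0 ≤ t →
      hFun M t ≤ (hFun M (ρ * t)) ^ s := by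
  obtain ⟨A₀, hA₀⟩ := hmg
  set A : ℝ := max A₀ 1 with hAdef
  have hA : 1 ≤ A := le_max_right _ _
  have hA0 : 0 < A := lt_of_lt_of_le one_pos hA
  have hAM : ∀ j, M (2*j) ≤ A ^ (2*j) * M j ^ 2 := by
    intro j
    rcases Nat.eq_zero_or_pos j with rfl | hj
    · simp [hM0]
    · have hjj : 1 ≤ j + j := by omega
      have h := hA₀ j j hjj
      set x : ℝ := M (j+j) / (M j * M j) with hxdef
      have hx : 0 < x := div_pos (hpos _) (mul_pos (hpos j) (hpos j))
      have hn : ((j:ℝ) + (j:ℝ)) ≠ 0 := by positivity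
      have h' : x ^ ((1:ℝ)/((j:ℝ)+(j:ℝ))) ≤ A := h.trans (le_max_left _ _)
      have hx' : x ≤ A ^ ((j:ℝ)+(j:ℝ)) := by
        have := Real.rpow_le_rpow (Real.rpow_nonneg hx.le _) h' (by positivity :
          (0:ℝ) ≤ (j:ℝ)+(j:ℝ))
        rwa [← Real.rpow_mul hx.le, one_div_mul_cancel hn, Real.rpow_one] at this
      have hApow : A ^ ((j:ℝ)+(j:ℝ)) = A ^ (2*j) := by
        rw [show (j:ℝ)+(j:ℝ) = ((2*j : ℕ) : ℝ) by push_cast; ring, Real.rpow_natCast]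
      rw [hApow] at hx'
      have : M (j+j) ≤ A ^ (2*j) * (M j * M j) := by
        rw [hxdef, div_le_iff₀ (mul_pos (hpos j) (hpos j))] at hx'
        exact hx'
      calc M (2*j) = M (j+j) := by rw [two_mul]
      _ ≤ A ^ (2*j) * (M j * M j) := this
      _ = A ^ (2*j) * M j ^ 2 := by ring
  intro s hs
  set n : ℕ := ⌈s⌉₊ with hndef
  have hs2 : s ≤ ((2^n : ℕ) : ℝ) := by
    calc s ≤ (n : ℝ) := Nat.le_ceil s
    _ ≤ ((2^n : ℕ) : ℝ) := by exact_mod_cast (Nat.lt_two_pow_self (n := n)).le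
  refine ⟨A^n, one_le_pow₀ hA, ?_⟩
  intro t ht
  rcases eq_or_lt_of_le ht with rfl | ht
  · have : hFun M 0 = 0 := by simp [hFun]
    rw [mul_zero, this, Real.zero_rpow (by linarith : s ≠ 0)]
  · have hAnt : 0 < A^n * t := mul_pos (pow_pos hA0 n) ht
    set x : ℝ := hFun M (A^n * t) with hxdef
    have hx0 : 0 ≤ x := hFun_nonneg hpos hAnt.le
    have hx1 : x ≤ 1 := hFun_le_one hpos hM0 hAnt
    have hmain : hFun M t ≤ x ^ (2^n : ℕ) := hFun_iter hpos hA hAM n t ht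
    rcases eq_or_lt_of_le hx0 with hx | hx
    · rw [← hx] at hmain ⊢
      rw [zero_pow (by positivity : (2^n : ℕ) ≠ 0)] at hmain
      rwa [Real.zero_rpow (by linarith : s ≠ 0)]
    · calc hFun M t ≤ x ^ (2^n : ℕ) := hmain
      _ = x ^ (((2^n : ℕ) : ℝ)) := (Real.rpow_natCast x _).symm
      _ ≤ x ^ s := Real.rpow_le_rpow_of_exponent_ge hx hx1 hs2

end
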